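/- arXiv:0803.1869 — 2 statements merged into one kernel-verified Lean document; each statement's English description precedes it below -/
import Mathlib

section
/- Fix masses m_1, m_2, … > 0, spring constants k_1, k_2, … and dashpot constants c_1, c_2, …, and set b_i(z) = z·c_i + k_i. Define polynomials inductively by P_1(z) = z², D_0(z) = 1, D_j(z) = P_j(z) + (b_j(z)/m_j)·D_{j−1}(z) for j ≥ 1, and P_j(z) = (z² + b_{j−1}(z)/m_j)·P_{j−1}(z) + z²·(b_{j−1}(z)/m_{j−1})·D_{j−2}(z) for j ≥ 2. Then for every k ≥ 1, D_k(z) = det(z²·I_k + z·C_k + K_k + W_k), where W_k is the k×k matrix whose only nonzero entry is (z·c_k + k_k)/m_k in position (k,k). -/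
open Polynomial

/-- The `N × N` tridiagonal matrix `X(x_1, …, x_{N−1})` of the spring–dashpot–mass chain
(0-based indexing: `ms i` is the mass `m_{i+1}` and `xs i` is the parameter `x_{i+1}`):
diagonal entries `(x_{i−1} + x_i)/m_i` (with the convention `x_0 = x_N = 0`),
superdiagonal entries `−x_i/m_i` and subdiagonal entries `−x_i/m_{i+1}`. -/
noncomputable def chainX (N : ℕ) (ms xs : ℕ → ℝ) : Matrix (Fin N) (Fin N) ℝ :=
  Matrix.of fun i j =>
    if i = j then
      ((if (i : ℕ) = 0 then 0 else xs ((i : ℕ) - 1)) +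
        (if (i : ℕ) = N - 1 then 0 else xs (i : ℕ))) / ms (i : ℕ)
    else if (j : ℕ) = (i : ℕ) + 1 then -xs (i : ℕ) / ms (i : ℕ)
    else if (i : ℕ) = (j : ℕ) + 1 then -xs (j : ℕ) / ms (i : ℕ)
    else 0

/-- The pair `(P_n, D_n)` of polynomials of Theorem 4.1, defined inductively by
`P_1(z) = z²`, `D_0(z) = 1`, `D_j = P_j + (b_j/m_j)·D_{j−1}` for `j ≥ 1`, and
`P_j = (z² + b_{j−1}/m_j)·P_{j−1} + z²·(b_{j−1}/m_{j−1})·D_{j−2}` for `j ≥ 2`, where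
`b_i(z) = z·c_i + k_i` (0-based data: `ms i = m_{i+1}`, `ks i = k_{i+1}`, `cs i = c_{i+1}`,
so `b_{i+1}(z)` is `X·C(cs i) + C(ks i)`; the unused value `P_0` is set to `0`). -/
noncomputable def chainPD (ms ks cs : ℕ → ℝ) : ℕ → Polynomial ℝ × Polynomial ℝ
  | 0 => (0, 1)
  | 1 =>
    (Polynomial.X ^ 2,
      Polynomial.X ^ 2 +
        Polynomial.C (1 / ms 0) * (Polynomial.X * Polynomial.C (cs 0) + Polynomial.C (ks 0)) * 1)
  | (n + 2) =>
    let b : ℕ → Polynomial ℝ := fun i => Polynomial.X * Polynomial.C (cs i) + Polynomial.C (ks i)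
    let P : Polynomial ℝ :=
      (Polynomial.X ^ 2 + Polynomial.C (1 / ms (n + 1)) * b n) * (chainPD ms ks cs (n + 1)).1 +
        Polynomial.X ^ 2 * Polynomial.C (1 / ms n) * b n * (chainPD ms ks cs n).2
    (P, P + Polynomial.C (1 / ms (n + 1)) * b (n + 1) * (chainPD ms ks cs (n + 1)).2)

/-- The `k × k` matrix `W_k` whose only nonzero entry is `(z·c_k + k_k)/m_k` in position
`(k, k)` (0-based data: `ms i = m_{i+1}`, etc.). -/
noncomputable def chainW (K : ℕ) (ms ks cs : ℕ → ℝ) : Matrix (Fin K) (Fin K) (Polynomial ℝ) :=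
  Matrix.of fun i j =>
    if (i : ℕ) = K - 1 ∧ (j : ℕ) = K - 1 then
      Polynomial.C (1 / ms (K - 1)) *
        (Polynomial.X * Polynomial.C (cs (K - 1)) + Polynomial.C (ks (K - 1)))
    else 0

section Tri
variable {R : Type*} [CommRing R]

/-- general tridiagonal matrix -/
def tri (a u l : ℕ → R) (K : ℕ) : Matrix (Fin K) (Fin K) R :=
  Matrix.of fun i j =>
    if (i : ℕ) = (j : ℕ) then a (i : ℕ)
    else if (j : ℕ) = (i : ℕ) + 1 then u (i : ℕ)
    else if (i : ℕ) = (j : ℕ) + 1 then l (j : ℕ)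
    else 0

lemma tri_apply (a u l : ℕ → R) (K : ℕ) (i j : Fin K) :
    tri a u l K i j =
      if (i : ℕ) = (j : ℕ) then a (i : ℕ)
      else if (j : ℕ) = (i : ℕ) + 1 then u (i : ℕ)
      else if (i : ℕ) = (j : ℕ) + 1 then l (j : ℕ)
      else 0 := rfl

lemma det_tri_zero (a u l : ℕ → R) : (tri a u l 0).det = 1 := Matrix.det_isEmpty

lemma det_tri_one (a u l : ℕ → R) : (tri a u l 1).det = a 0 := by
  rw [Matrix.det_fin_one, tri_apply]; simp

lemma det_tri_rec (a u l : ℕ → R) (n : ℕ) :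
    (tri a u l (n + 2)).det =
      a (n + 1) * (tri a u l (n + 1)).det - u n * l n * (tri a u l n).det := by
  rw [Matrix.det_succ_row _ (Fin.last (n + 1))]
  rw [Fin.sum_univ_castSucc, Fin.sum_univ_castSucc]
  have hzero : ∀ j : Fin n,
      (-1 : R) ^ ((Fin.last (n+1) : ℕ) + ((j.castSucc.castSucc : Fin (n+2)) : ℕ)) *
        tri a u l (n+2) (Fin.last (n+1)) j.castSucc.castSucc *
        ((tri a u l (n+2)).submatrix (Fin.last (n+1)).succAbove
          (j.castSucc.castSucc).succAbove).det = 0 := by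
    intro j
    have hj : (j : ℕ) < n := j.isLt
    rw [tri_apply]
    rw [if_neg (by simp; omega), if_neg (by simp; omega), if_neg (by simp; omega)]
    ring
  rw [Finset.sum_eq_zero fun j _ => hzero j, zero_add]
  have hlastentry : tri a u l (n+2) (Fin.last (n+1)) (Fin.last (n+1)) = a (n+1) := by
    rw [tri_apply, if_pos rfl]; simp
  have hsubentry : tri a u l (n+2) (Fin.last (n+1)) ((Fin.last n).castSucc) = l n := by
    rw [tri_apply, if_neg (by simp), if_neg (by simp; omega), if_pos (by simp)]; simp
  have hminor1 : (tri a u l (n+2)).submatrix (Fin.last (n+1)).succAbove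
      (Fin.last (n+1)).succAbove = tri a u l (n+1) := by
    ext i j
    rw [Fin.succAbove_last, Matrix.submatrix_apply, tri_apply, tri_apply]
    simp
  have hminor2 : ((tri a u l (n+2)).submatrix (Fin.last (n+1)).succAbove
      ((Fin.last n).castSucc : Fin (n+2)).succAbove).det = u n * (tri a u l n).det := by
    set B := (tri a u l (n+2)).submatrix (Fin.last (n+1)).succAbove
      ((Fin.last n).castSucc : Fin (n+2)).succAbove with hB
    rw [Matrix.det_succ_column B (Fin.last n), Fin.sum_univ_castSucc]
    have hcol : ∀ i : Fin (n+1), B i (Fin.last n) =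
        if (i : ℕ) = n then u n else 0 := by
      intro i
      have hsa : (((Fin.last n).castSucc : Fin (n+2)).succAbove (Fin.last n) : ℕ) = n + 1 := by
        simp [Fin.succAbove, Fin.lt_def]
      rw [hB, Matrix.submatrix_apply, Fin.succAbove_last, tri_apply]
      rw [Fin.coe_castSucc, hsa]
      have hi : (i : ℕ) ≤ n := Fin.is_le i
      split_ifs with h1 h2 h3 h4 <;> first | omega | rfl | simp_all
    have hz : ∀ i : Fin n,
        (-1 : R) ^ ((i.castSucc : ℕ) + ((Fin.last n : Fin (n+1)) : ℕ)) *
          B i.castSucc (Fin.last n) *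
          (B.submatrix i.castSucc.succAbove (Fin.last n).succAbove).det = 0 := by
      intro i
      rw [hcol, if_neg (by have := i.isLt; simp; omega)]
      ring
    rw [Finset.sum_eq_zero fun i _ => hz i, zero_add]
    rw [hcol, if_pos (by simp)]
    have hminor3 : B.submatrix (Fin.last n).succAbove (Fin.last n).succAbove = tri a u l n := by
      ext i j
      have hj : (j : ℕ) < n := j.isLt
      have hsa : ((((Fin.last n).castSucc : Fin (n+2)).succAbove j.castSucc) : ℕ) = (j : ℕ) := by
        simp [Fin.succAbove, Fin.lt_def]
        try omega
      rw [Fin.succAbove_last, hB, Matrix.submatrix_apply, Matrix.submatrix_apply,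
        Fin.succAbove_last, tri_apply, tri_apply, hsa]
      simp
    rw [hminor3]
    have : ((Fin.last n : Fin (n+1)) : ℕ) + ((Fin.last n : Fin (n+1)) : ℕ) = 2 * n := by
      simp; ring
    rw [this, pow_mul]
    simp
  rw [hlastentry, hsubentry, hminor1, hminor2]
  have h1 : ((Fin.last (n+1) : Fin (n+2)) : ℕ) + (((Fin.last n).castSucc : Fin (n+2)) : ℕ)
      = 2 * n + 1 := by simp; ring
  have h2 : ((Fin.last (n+1) : Fin (n+2)) : ℕ) + ((Fin.last (n+1) : Fin (n+2)) : ℕ)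
      = 2 * (n + 1) := by simp; ring
  rw [h1, h2, pow_succ, pow_mul, pow_mul]
  simp
  ring

end Tri

noncomputable def triA (ms ks cs : ℕ → ℝ) (i : ℕ) : Polynomial ℝ :=
  X ^ 2 + X * C (((if i = 0 then 0 else cs (i - 1)) + cs i) / ms i)
    + C (((if i = 0 then 0 else ks (i - 1)) + ks i) / ms i)

noncomputable def triU (ms ks cs : ℕ → ℝ) (i : ℕ) : Polynomial ℝ :=
  X * C (-cs i / ms i) + C (-ks i / ms i)

noncomputable def triL (ms ks cs : ℕ → ℝ) (i : ℕ) : Polynomial ℝ :=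
  X * C (-cs i / ms (i + 1)) + C (-ks i / ms (i + 1))

lemma chainPD_fst_eq (ms ks cs : ℕ → ℝ) (n : ℕ) :
    (chainPD ms ks cs (n + 1)).1 =
      (chainPD ms ks cs (n + 1)).2 -
        C (1 / ms n) * (X * C (cs n) + C (ks n)) * (chainPD ms ks cs n).2 := by
  cases n with
  | zero => simp [chainPD]
  | succ m => simp [chainPD]

lemma chainPD_D_rec (ms ks cs : ℕ → ℝ) (n : ℕ) :
    (chainPD ms ks cs (n + 2)).2 =
      triA ms ks cs (n + 1) * (chainPD ms ks cs (n + 1)).2 -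
        triU ms ks cs n * triL ms ks cs n * (chainPD ms ks cs n).2 := by
  have h := chainPD_fst_eq ms ks cs n
  rw [show (chainPD ms ks cs (n+2)).2 =
      ((X ^ 2 + C (1 / ms (n + 1)) * (X * C (cs n) + C (ks n))) * (chainPD ms ks cs (n + 1)).1 +
        X ^ 2 * C (1 / ms n) * (X * C (cs n) + C (ks n)) * (chainPD ms ks cs n).2) +
        C (1 / ms (n + 1)) * (X * C (cs (n + 1)) + C (ks (n + 1))) *
          (chainPD ms ks cs (n + 1)).2 from rfl]
  rw [h]
  unfold triA triU triL
  rw [if_neg (Nat.succ_ne_zero n), if_neg (Nat.succ_ne_zero n)]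
  simp only [Nat.add_sub_cancel, one_div, div_eq_mul_inv, map_mul, map_add, map_neg, map_one,
    neg_mul, one_mul]
  ring

lemma chainPD_snd_eq_det_tri (ms ks cs : ℕ → ℝ) (n : ℕ) :
    (chainPD ms ks cs n).2 = (tri (triA ms ks cs) (triU ms ks cs) (triL ms ks cs) n).det := by
  induction n using Nat.twoStepInduction with
  | zero => rw [det_tri_zero]; rfl
  | one =>
    rw [det_tri_one]
    show X ^ 2 + C (1 / ms 0) * (X * C (cs 0) + C (ks 0)) * 1 = triA ms ks cs 0
    unfold triA
    rw [if_pos rfl, if_pos rfl]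
    simp only [one_div, zero_add, div_eq_mul_inv, map_mul, map_add, map_one, one_mul]
    ring
  | more n ih0 ih1 =>
    rw [det_tri_rec, ← ih0, ← ih1, chainPD_D_rec]

lemma matrix_eq_tri (ms ks cs : ℕ → ℝ) (K : ℕ) (hK : 1 ≤ K) :
    ((Polynomial.X : Polynomial ℝ) ^ 2 • (1 : Matrix (Fin K) (Fin K) (Polynomial ℝ)) +
          (Polynomial.X : Polynomial ℝ) • (chainX K ms cs).map Polynomial.C +
          (chainX K ms ks).map Polynomial.C +
          chainW K ms ks cs) =
      tri (triA ms ks cs) (triU ms ks cs) (triL ms ks cs) K := by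
  ext i j
  have hi := i.isLt
  have hj := j.isLt
  simp only [Matrix.add_apply, Matrix.smul_apply, Matrix.map_apply, Matrix.one_apply,
    chainX, chainW, Matrix.of_apply, tri_apply, smul_eq_mul, triA, triU, triL, Fin.ext_iff]
  by_cases hij : (i : ℕ) = (j : ℕ)
  · simp only [if_pos hij]
    by_cases hK1 : (i : ℕ) = K - 1
    · have hW : (i : ℕ) = K - 1 ∧ (j : ℕ) = K - 1 := ⟨hK1, hij.symm.trans hK1⟩
      simp only [if_pos hW, if_pos hK1]
      rw [hK1]
      by_cases h0 : K - 1 = 0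
      · simp only [if_pos h0]
        simp only [one_div, zero_add, add_zero, div_eq_mul_inv, map_mul, map_add, map_one,
          map_zero, zero_mul, mul_zero, one_mul, mul_one]
        try ring
      · simp only [if_neg h0]
        simp only [one_div, add_zero, div_eq_mul_inv, map_mul, map_add, map_one, one_mul, mul_one]
        try ring
    · have hW' : ¬((i : ℕ) = K - 1 ∧ (j : ℕ) = K - 1) := fun hc => hK1 hc.1
      simp only [if_neg hW', if_neg hK1]
      by_cases h0 : (i : ℕ) = 0
      · simp only [if_pos h0]
        simp only [zero_add, div_eq_mul_inv, map_mul, map_add, add_zero, mul_one]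
        try ring
      · simp only [if_neg h0]
        simp only [div_eq_mul_inv, map_mul, map_add, add_zero, mul_one]
        try ring
  · have hW' : ¬((i : ℕ) = K - 1 ∧ (j : ℕ) = K - 1) := fun hc => hij (hc.1.trans hc.2.symm)
    simp only [if_neg hij, if_neg hW']
    by_cases h1 : (j : ℕ) = (i : ℕ) + 1
    · simp only [if_pos h1]
      simp only [div_eq_mul_inv, map_mul, map_neg, neg_mul, mul_zero, add_zero]
      ring
    · simp only [if_neg h1]
      by_cases h2 : (i : ℕ) = (j : ℕ) + 1
      · simp only [if_pos h2]
        rw [h2]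
        simp only [div_eq_mul_inv, map_mul, map_neg, neg_mul, mul_zero, add_zero]
        try ring
      · simp only [if_neg h2]
        simp

/-- **Theorem 4.1 (identification of the auxiliary determinants).**  For all masses
`m_1, m_2, … > 0`, spring constants `k_1, k_2, …` and dashpot constants `c_1, c_2, …`, the
inductively defined polynomial `D_k` equals `det(z²·I_k + z·C_k + K_k + W_k)`, for every
`k ≥ 1`. -/
theorem chainPD_snd_eq_det (ms ks cs : ℕ → ℝ) (hm : ∀ i, 0 < ms i)
    (K : ℕ) (hK : 1 ≤ K) :
    (chainPD ms ks cs K).2 =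
      Matrix.det
        ((Polynomial.X : Polynomial ℝ) ^ 2 • (1 : Matrix (Fin K) (Fin K) (Polynomial ℝ)) +
          (Polynomial.X : Polynomial ℝ) • (chainX K ms cs).map Polynomial.C +
          (chainX K ms ks).map Polynomial.C +
          chainW K ms ks cs) := by
  
  rw [matrix_eq_tri ms ks cs K hK]
  exact chainPD_snd_eq_det_tri ms ks cs K
end

section
/- For N = 3, let m_1, m_2, m_3 > 0 be masses and k_1, k_2, c_1, c_2 > 0 spring and dashpot constants, and set z_1 = −k_1/c_1 and z_2 = −k_2/c_2 (the roots of the adjoint polynomial Q_3). Then the characteristic polynomial P_3(z) = det(z·I_6 − F_3) satisfies: P_3(z_1) = 0 if and only if k_1²/c_1² + (k_2 − (k_1/c_1)·c_2)·(1/m_2 + 1/m_3) = 0, and P_3(z_2) = 0 if and only if k_2²/c_2² + (k_1 − (k_2/c_2)·c_1)·(1/m_1 + 1/m_2) = 0. -/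
open Polynomial

/-- The `2N × 2N` state matrix `F_N = [[O_N, I_N], [−K_N, −C_N]]` of the chain, where
`K_N = X(k_1, …, k_{N−1})` and `C_N = X(c_1, …, c_{N−1})`. -/
noncomputable def chainF (N : ℕ) (ms ks cs : ℕ → ℝ) :
    Matrix (Fin N ⊕ Fin N) (Fin N ⊕ Fin N) ℝ :=
  Matrix.fromBlocks 0 1 (-(chainX N ms ks)) (-(chainX N ms cs))

lemma eval_charpoly' {n : Type*} [Fintype n] [DecidableEq n] (M : Matrix n n ℝ) (z : ℝ) :
    (M.charpoly).eval z = (z • (1 : Matrix n n ℝ) - M).det := by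
  rw [Matrix.charpoly, ← Polynomial.coe_evalRingHom, RingHom.map_det]
  congr 1
  ext i j
  by_cases h : i = j <;>
    simp [Matrix.charmatrix_apply, Matrix.one_apply, h, Matrix.diagonal_apply]

lemma smul_one_sub_chainF (ms ks cs : ℕ → ℝ) (z : ℝ) :
    z • (1 : Matrix (Fin 3 ⊕ Fin 3) (Fin 3 ⊕ Fin 3) ℝ) - chainF 3 ms ks cs =
      Matrix.fromBlocks (z • (1 : Matrix (Fin 3) (Fin 3) ℝ)) (-1) (chainX 3 ms ks)
        (z • (1 : Matrix (Fin 3) (Fin 3) ℝ) + chainX 3 ms cs) := by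
  rw [chainF, ← Matrix.fromBlocks_one, Matrix.fromBlocks_smul, sub_eq_add_neg,
    Matrix.fromBlocks_neg, Matrix.fromBlocks_add]
  simp

lemma key (ms ks cs : ℕ → ℝ) (z : ℝ) (hz : z ≠ 0) :
    (Matrix.charpoly (chainF 3 ms ks cs)).eval z =
      z ^ 3 * (z • (1 : Matrix (Fin 3) (Fin 3) ℝ) + chainX 3 ms cs
          + z⁻¹ • chainX 3 ms ks).det := by
  haveI : Invertible (z • (1 : Matrix (Fin 3) (Fin 3) ℝ)) :=
    ⟨z⁻¹ • 1, by rw [smul_mul_smul_comm, one_mul, inv_mul_cancel₀ hz, one_smul],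
      by rw [smul_mul_smul_comm, one_mul, mul_inv_cancel₀ hz, one_smul]⟩
  rw [eval_charpoly', smul_one_sub_chainF, Matrix.det_fromBlocks₁₁]
  have h1 : (⅟(z • (1 : Matrix (Fin 3) (Fin 3) ℝ))) = z⁻¹ • 1 := by
    apply invOf_eq_right_inv
    rw [smul_mul_smul_comm, one_mul, mul_inv_cancel₀ hz, one_smul]
  rw [h1]
  congr 1
  · simp [Matrix.det_smul]
  · congr 1
    rw [Matrix.mul_smul, Matrix.mul_one, Matrix.smul_mul, Matrix.mul_neg, Matrix.mul_one,
      smul_neg, sub_neg_eq_add]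

set_option maxHeartbeats 1000000 in
lemma eval_one (ms ks cs : ℕ → ℝ)
    (hm1 : 0 < ms 0) (hm2 : 0 < ms 1) (hm3 : 0 < ms 2)
    (hk1 : 0 < ks 0) (hc1 : 0 < cs 0) :
    Polynomial.eval (-(ks 0 / cs 0)) (Matrix.charpoly (chainF 3 ms ks cs)) =
      (ks 0 / cs 0) ^ 4 *
        (ks 0 ^ 2 / cs 0 ^ 2 + (ks 1 - ks 0 / cs 0 * cs 1) * (1 / ms 1 + 1 / ms 2)) := by
  have hz : (-(ks 0 / cs 0)) ≠ 0 := neg_ne_zero.mpr (div_pos hk1 hc1).ne'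
  rw [key ms ks cs _ hz, Matrix.det_fin_three]
  simp only [chainX, Matrix.smul_apply, Matrix.add_apply, Matrix.one_apply, Matrix.of_apply]
  simp only [Fin.isValue, show ((0:Fin 3) = 0) = True by simp,
    show ((0:Fin 3) = 1) = False by decide,
    show ((0:Fin 3) = 2) = False by decide, show ((1:Fin 3) = 0) = False by decide,
    show ((1:Fin 3) = 1) = True by simp, show ((1:Fin 3) = 2) = False by decide,
    show ((2:Fin 3) = 0) = False by decide, show ((2:Fin 3) = 1) = False by decide,
    show ((2:Fin 3) = 2) = True by simp, show (((0:Fin 3)):ℕ) = 0 from rfl,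
    show (((1:Fin 3)):ℕ) = 1 from rfl, show (((2:Fin 3)):ℕ) = 2 from rfl,
    if_true, if_false]
  norm_num
  field_simp
  ring

set_option maxHeartbeats 1000000 in
lemma eval_two (ms ks cs : ℕ → ℝ)
    (hm1 : 0 < ms 0) (hm2 : 0 < ms 1) (hm3 : 0 < ms 2)
    (hk2 : 0 < ks 1) (hc2 : 0 < cs 1) :
    Polynomial.eval (-(ks 1 / cs 1)) (Matrix.charpoly (chainF 3 ms ks cs)) =
      (ks 1 / cs 1) ^ 4 *
        (ks 1 ^ 2 / cs 1 ^ 2 + (ks 0 - ks 1 / cs 1 * cs 0) * (1 / ms 0 + 1 / ms 1)) := by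
  have hz : (-(ks 1 / cs 1)) ≠ 0 := neg_ne_zero.mpr (div_pos hk2 hc2).ne'
  rw [key ms ks cs _ hz, Matrix.det_fin_three]
  simp only [chainX, Matrix.smul_apply, Matrix.add_apply, Matrix.one_apply, Matrix.of_apply]
  simp only [Fin.isValue, show ((0:Fin 3) = 0) = True by simp,
    show ((0:Fin 3) = 1) = False by decide,
    show ((0:Fin 3) = 2) = False by decide, show ((1:Fin 3) = 0) = False by decide,
    show ((1:Fin 3) = 1) = True by simp, show ((1:Fin 3) = 2) = False by decide,
    show ((2:Fin 3) = 0) = False by decide, show ((2:Fin 3) = 1) = False by decide,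
    show ((2:Fin 3) = 2) = True by simp, show (((0:Fin 3)):ℕ) = 0 from rfl,
    show (((1:Fin 3)):ℕ) = 1 from rfl, show (((2:Fin 3)):ℕ) = 2 from rfl,
    if_true, if_false]
  norm_num
  field_simp
  ring

/-- For `N = 3`, masses `m_1, m_2, m_3 > 0` and positive constants `k_1, k_2, c_1, c_2`
(0-based: `ms 0 = m_1`, …, `ks 0 = k_1`, `ks 1 = k_2`, `cs 0 = c_1`, `cs 1 = c_2`), with
`z_1 = −k_1/c_1` and `z_2 = −k_2/c_2` the roots of the adjoint polynomial `Q_3`, the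
characteristic polynomial `P_3(z) = det(z·I_6 − F_3)` satisfies:
`P_3(z_1) = 0 ↔ k_1²/c_1² + (k_2 − (k_1/c_1)·c_2)·(1/m_2 + 1/m_3) = 0` and
`P_3(z_2) = 0 ↔ k_2²/c_2² + (k_1 − (k_2/c_2)·c_1)·(1/m_1 + 1/m_2) = 0`. -/
theorem charpoly_three_root_iff (ms ks cs : ℕ → ℝ)
    (hm1 : 0 < ms 0) (hm2 : 0 < ms 1) (hm3 : 0 < ms 2)
    (hk1 : 0 < ks 0) (hk2 : 0 < ks 1) (hc1 : 0 < cs 0) (hc2 : 0 < cs 1) :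
    (Polynomial.eval (-(ks 0 / cs 0)) (Matrix.charpoly (chainF 3 ms ks cs)) = 0 ↔
        ks 0 ^ 2 / cs 0 ^ 2 + (ks 1 - ks 0 / cs 0 * cs 1) * (1 / ms 1 + 1 / ms 2) = 0) ∧
      (Polynomial.eval (-(ks 1 / cs 1)) (Matrix.charpoly (chainF 3 ms ks cs)) = 0 ↔
        ks 1 ^ 2 / cs 1 ^ 2 + (ks 0 - ks 1 / cs 1 * cs 0) * (1 / ms 0 + 1 / ms 1) = 0) := by
  have h1 : (ks 0 / cs 0) ^ 4 ≠ 0 := pow_ne_zero _ (div_pos hk1 hc1).ne'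
  have h2 : (ks 1 / cs 1) ^ 4 ≠ 0 := pow_ne_zero _ (div_pos hk2 hc2).ne'
  constructor
  · rw [eval_one ms ks cs hm1 hm2 hm3 hk1 hc1, mul_eq_zero]
    simp [h1]
  · rw [eval_two ms ks cs hm1 hm2 hm3 hk2 hc2, mul_eq_zero]
    simp [h2]
end
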